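/- Let k be a commutative ring which is a ℚ-algebra, A an associative unital k-algebra, and x ∈ A. Then for all natural numbers p, q: binom(x,p)·binom(x,q) = Σ_{t=0}^{min(p,q)} ((p+q−t)!/((p−t)!·(q−t)!·t!))·binom(x,p+q−t). -/

import Mathlib

/-- The binomial coefficient `binom(x,r) = x(x−1)⋯(x−r+1)/r!` of an element `x` of a
(possibly noncommutative) ℚ-algebra `A`; for `r = 0` it equals `1`. -/
noncomputable def binomEl {A : Type*} [Ring A] [Module ℚ A] (x : A) (r : ℕ) : A :=
  (r.factorial : ℚ)⁻¹ • (((List.range r).map (fun i : ℕ => x - (i : A))).prod)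

open Polynomial in
/-- The binomial coefficient polynomial in `ℚ[X]`. -/
noncomputable def binomPoly (r : ℕ) : Polynomial ℚ :=
  (r.factorial : ℚ)⁻¹ • (((List.range r).map (fun i : ℕ => (X : ℚ[X]) - (i : ℚ[X]))).prod)

lemma list_prod_range_eq {M : Type*} [CommMonoid M] (f : ℕ → M) (n : ℕ) :
    ((List.range n).map f).prod = ∏ i ∈ Finset.range n, f i := by
  induction n with
  | zero => simp
  | succ n ih => simp [List.range_succ, Finset.prod_range_succ, ih]

lemma binomPoly_eval (n r : ℕ) : (binomPoly r).eval (n : ℚ) = n.choose r := by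
  rcases le_or_gt r n with h | h
  · have hprod : (∏ i ∈ Finset.range r, ((n : ℚ) - i)) = (n.descFactorial r : ℚ) := by
      rw [Nat.descFactorial_eq_prod_range, Nat.cast_prod]
      refine Finset.prod_congr rfl fun i hi => ?_
      rw [Finset.mem_range] at hi
      rw [Nat.cast_sub (by omega)]
    rw [binomPoly, list_prod_range_eq]
    simp only [Polynomial.eval_smul, Polynomial.eval_prod, Polynomial.eval_sub,
      Polynomial.eval_X, Polynomial.eval_natCast, smul_eq_mul]
    rw [hprod, Nat.descFactorial_eq_factorial_mul_choose, Nat.cast_mul, ← mul_assoc,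
      inv_mul_cancel₀ (by exact_mod_cast Nat.factorial_ne_zero r), one_mul]
  · rw [binomPoly, list_prod_range_eq]
    simp only [Polynomial.eval_smul, Polynomial.eval_prod, Polynomial.eval_sub,
      Polynomial.eval_X, Polynomial.eval_natCast, smul_eq_mul]
    rw [Finset.prod_eq_zero (Finset.mem_range.mpr h) (by simp), mul_zero,
      Nat.choose_eq_zero_of_lt h, Nat.cast_zero]

lemma dvd_fac (p q t : ℕ) (ht : t ≤ p) (ht' : t ≤ q) :
    (p - t).factorial * (q - t).factorial * t.factorial ∣ (p + q - t).factorial := by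
  have h1 : (p - t).factorial * (q - t).factorial ∣ (p + q - 2*t).factorial := by
    have := Nat.factorial_mul_factorial_dvd_factorial_add (p - t) (q - t)
    rwa [show p - t + (q - t) = p + q - 2*t by omega] at this
  have h2 : (p + q - 2*t).factorial * t.factorial ∣ (p + q - t).factorial := by
    have := Nat.factorial_mul_factorial_dvd_factorial_add (p + q - 2*t) t
    rwa [show p + q - 2*t + t = p + q - t by omega] at this
  exact dvd_trans (mul_dvd_mul_right h1 _) h2

lemma term_eq (n p q t : ℕ) (hp : p ≤ n) (ht : t ≤ p) (ht' : t ≤ q) :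
    (((p + q - t).factorial / ((p - t).factorial * (q - t).factorial * t.factorial) : ℕ) : ℚ)
        * n.choose (p + q - t)
      = (n.choose p : ℚ) * (p.choose t * (n - p).choose (q - t)) := by
  rcases le_or_gt (p + q - t) n with h | h
  · have hd := dvd_fac p q t ht ht'
    rw [Nat.cast_div hd (by exact_mod_cast by positivity)]
    rw [Nat.cast_choose ℚ h, Nat.cast_choose ℚ hp, Nat.cast_choose ℚ ht,
      Nat.cast_choose ℚ (show q - t ≤ n - p by omega),
      show n - p - (q - t) = n - (p + q - t) by omega]
    have hfac : ∀ m : ℕ, (m.factorial : ℚ) ≠ 0 :=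
      fun m => Nat.cast_ne_zero.2 (Nat.factorial_ne_zero m)
    push_cast
    field_simp
  · rw [Nat.choose_eq_zero_of_lt h, Nat.choose_eq_zero_of_lt (show n - p < q - t by omega)]
    simp

lemma key (n p q : ℕ) :
    (n.choose p : ℚ) * n.choose q =
      ∑ t ∈ Finset.range (min p q + 1),
        (((p + q - t).factorial / ((p - t).factorial * (q - t).factorial * t.factorial) : ℕ) : ℚ)
          * n.choose (p + q - t) := by
  rcases lt_or_ge n p with h | h
  · rw [Nat.choose_eq_zero_of_lt h, Nat.cast_zero, zero_mul]
    refine (Finset.sum_eq_zero fun t ht => ?_).symm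
    rw [Finset.mem_range] at ht
    rw [Nat.choose_eq_zero_of_lt (by omega), Nat.cast_zero, mul_zero]
  · have vand : n.choose q =
        ∑ t ∈ Finset.range (min p q + 1), p.choose t * (n - p).choose (q - t) := by
      have h1 : n.choose q = (p + (n - p)).choose q := by
        rw [Nat.add_sub_cancel' h]
      rw [h1, Nat.add_choose_eq, Finset.Nat.sum_antidiagonal_eq_sum_range_succ_mk]
      refine (Finset.sum_subset ?_ ?_).symm
      · intro t ht
        rw [Finset.mem_range] at *
        omega
      · intro t ht hnt
        rw [Finset.mem_range] at *
        rw [Nat.choose_eq_zero_of_lt (by omega), zero_mul]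
    rw [Finset.sum_congr rfl fun t ht => term_eq n p q t h
        (by rw [Finset.mem_range] at ht; omega) (by rw [Finset.mem_range] at ht; omega),
      ← Finset.mul_sum]
    congr 1
    rw [vand]
    push_cast
    rfl

open Polynomial in
lemma binomPoly_mul (p q : ℕ) :
    binomPoly p * binomPoly q =
      ∑ t ∈ Finset.range (min p q + 1),
        (((p + q - t).factorial / ((p - t).factorial * (q - t).factorial * t.factorial) : ℕ) : ℚ)
          • binomPoly (p + q - t) := by
  apply Polynomial.eq_of_infinite_eval_eq
  refine Set.Infinite.mono ?_ (Set.infinite_range_of_injective (Nat.cast_injective (R := ℚ)))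
  rintro x ⟨n, rfl⟩
  simp only [Set.mem_setOf_eq, Polynomial.eval_mul, Polynomial.eval_finset_sum,
    Polynomial.eval_smul, binomPoly_eval, smul_eq_mul]
  exact key n p q

lemma binomEl_eq_aeval {A : Type*} [Ring A] [Algebra ℚ A] (x : A) (r : ℕ) :
    binomEl x r = Polynomial.aeval x (binomPoly r) := by
  unfold binomEl binomPoly
  rw [map_smul]
  congr 1
  rw [← AlgHom.coe_toRingHom, map_list_prod]
  congr 1
  rw [List.map_map]
  refine List.map_congr_left fun i hi => ?_
  simp

/-- Let `k` be a commutative ring which is a ℚ-algebra, `A` an associative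
unital `k`-algebra, and `x ∈ A`.  Then for all naturals `p, q`:
`binom(x,p)·binom(x,q) = ∑_{t=0}^{min(p,q)} ((p+q−t)!/((p−t)!·(q−t)!·t!)) · binom(x,p+q−t)`. -/
theorem stmt1 {k A : Type*} [CommRing k] [Algebra ℚ k] [Ring A] [Algebra k A]
    [Algebra ℚ A] [IsScalarTower ℚ k A] (x : A) (p q : ℕ) :
    binomEl x p * binomEl x q =
      ∑ t ∈ Finset.range (min p q + 1),
        ((p + q - t).factorial / ((p - t).factorial * (q - t).factorial * t.factorial)) •
          binomEl x (p + q - t) := by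
  have h := congrArg (Polynomial.aeval x) (binomPoly_mul p q)
  simp only [map_mul, map_sum, map_smul] at h
  rw [binomEl_eq_aeval x p, binomEl_eq_aeval x q, h]
  refine Finset.sum_congr rfl fun t ht => ?_
  rw [binomEl_eq_aeval, Nat.cast_smul_eq_nsmul]
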